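/- (Tightness of the quadratic relationship between CDL and interval calibration error.) Define CE_Int(J) = sup over intervals I ⊆ [0,1] of | E_{(p,y)~J}[ 1[p ∈ I]·(y − p) ] |. Then for every ε ∈ (0, 1/2): (a) the distribution J₁ on [0,1] × {0,1} with p = 1 − ε and y = 1 almost surely satisfies CE_Int(J₁) ≤ ε and CDL_{M₊}(J₁) ≥ ε, hence CDL_{M₊}(J₁) ≥ CE_Int(J₁); (b) the distribution J₂ on [0,1] × {0,1} in which p is uniform on [0, 1−ε] and, conditionally on p, y ~ Bernoulli(p + ε), satisfies CE_Int(J₂) ≥ ε and CDL_{M₊}(J₂) ≤ 4ε², hence CDL_{M₊}(J₂) ≤ 4·CE_Int(J₂)². -/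

import Mathlib

open MeasureTheory Set
open scoped ENNReal NNReal

noncomputable section

/-- Expected loss of prediction `p` when the outcome is `y ~ Bernoulli(q)`:
`ℓ(p,q) = q·ℓ(p,1) + (1−q)·ℓ(p,0)`. -/
def elos (ℓ : ℝ → ℝ → ℝ) (p q : ℝ) : ℝ := q * ℓ p 1 + (1 - q) * ℓ p 0

/-- A loss is proper if truthful prediction minimizes expected loss. -/
def IsProper (ℓ : ℝ → ℝ → ℝ) : Prop :=
  ∀ p ∈ Icc (0:ℝ) 1, ∀ q ∈ Icc (0:ℝ) 1, elos ℓ q q ≤ elos ℓ p q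

/-- The class `L*` of proper losses with `|ℓ(p,1) − ℓ(p,0)| ≤ 1`. -/
def Lstar (ℓ : ℝ → ℝ → ℝ) : Prop :=
  IsProper ℓ ∧ ∀ p ∈ Icc (0:ℝ) 1, |ℓ p 1 - ℓ p 0| ≤ 1

/-- Projection onto `[0,1]`. -/
def proj01 (x : ℝ) : ℝ := max 0 (min 1 x)

/-- Calibration decision loss of `J` relative to the post-processing class `K`:
`sup` over `ℓ ∈ L*` and `κ ∈ K` of `E[ℓ(p,y) − ℓ(κ(p),y)]`. -/
def CDL (K : Set (ℝ → ℝ)) (J : Measure (ℝ × ℝ)) : ℝ :=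
  sSup { x | ∃ ℓ κ, Lstar ℓ ∧ κ ∈ K ∧
    x = ∫ z, (ℓ z.1 z.2 - ℓ (κ z.1) z.2) ∂J }

/-- `sign_s(t)`: `+1` if `t > 0`, `−1` if `t < 0`, and `s` if `t = 0`. -/
def signS (s t : ℝ) : ℝ := if 0 < t then 1 else if t < 0 then -1 else s

/-- `sign₊ = sign_{+1}`. -/
def signP (t : ℝ) : ℝ := signS 1 t

/-- The V-shaped loss `ℓ_{v,s}(p,y) = −sign_s(p−v)·(y−v)`. -/
def vloss (v s : ℝ) : ℝ → ℝ → ℝ := fun p y => -(signS s (p - v)) * (y - v)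

/-- A valid post-processing class: maps `[0,1]` to `[0,1]`, contains the identity, and
is translation invariant. -/
def ValidClass (K : Set (ℝ → ℝ)) : Prop :=
  (∀ κ ∈ K, ∀ p ∈ Icc (0:ℝ) 1, κ p ∈ Icc (0:ℝ) 1) ∧
  ((fun p : ℝ => p) ∈ K) ∧
  (∀ s t : ℝ, ∀ κ ∈ K, (fun p : ℝ => proj01 (κ (proj01 (p + s)) + t)) ∈ K)

/-- Upper thresholds of a post-processing class. -/
def thr (K : Set (ℝ → ℝ)) : Set (ℝ → ℝ) :=
  { w | ∃ κ ∈ K, w = fun p => signP (κ p - 1/2) }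

/-- Modified thresholds: `thr(K)` together with all lower thresholds of the identity. -/
def thr' (K : Set (ℝ → ℝ)) : Set (ℝ → ℝ) :=
  thr K ∪ { w | ∃ v : ℝ, w = fun p => -signP (p - v) }

/-- Weight-restricted calibration error `CE_W(J) = sup_{w ∈ W} E[w(p)(y − p)]`. -/
def CE (W : Set (ℝ → ℝ)) (J : Measure (ℝ × ℝ)) : ℝ :=
  sSup { x | ∃ w ∈ W, x = ∫ z, w z.1 * (z.2 - z.1) ∂J }

/-- A probability distribution on `[0,1] × {0,1}`. -/
def IsPredDist (J : Measure (ℝ × ℝ)) : Prop :=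
  IsProbabilityMeasure J ∧ ∀ᵐ z ∂J, z.1 ∈ Icc (0:ℝ) 1 ∧ (z.2 = 0 ∨ z.2 = 1)

/-- The class `M₊` of nondecreasing post-processings `[0,1] → [0,1]`. -/
def Mplus : Set (ℝ → ℝ) :=
  { κ | (∀ p ∈ Icc (0:ℝ) 1, κ p ∈ Icc (0:ℝ) 1) ∧ MonotoneOn κ (Icc (0:ℝ) 1) }

/-- Interval-restricted calibration error:
`CE_Int(J) = sup_{intervals I ⊆ [0,1]} |E[1[p ∈ I]·(y − p)]|`. -/
def CEInt (J : Measure (ℝ × ℝ)) : ℝ :=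
  sSup { x | ∃ I : Set ℝ, I.OrdConnected ∧ I ⊆ Icc (0:ℝ) 1 ∧
    x = |∫ z, I.indicator (fun _ => (1:ℝ)) z.1 * (z.2 - z.1) ∂J| }

section Aux
variable {ℓ : ℝ → ℝ → ℝ}

lemma gap_anti (hl : Lstar ℓ) {a b : ℝ} (ha : a ∈ Icc (0:ℝ) 1) (hb : b ∈ Icc (0:ℝ) 1)
    (hab : a ≤ b) : ℓ b 1 - ℓ b 0 ≤ ℓ a 1 - ℓ a 0 := by
  have h1 := hl.1 b hb a ha
  have h2 := hl.1 a ha b hb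
  simp only [elos] at h1 h2
  rcases eq_or_lt_of_le hab with h | h
  · subst h; linarith
  · have hc : (b - a) * ((ℓ b 1 - ℓ b 0) - (ℓ a 1 - ℓ a 0)) ≤ (b - a) * 0 := by
      ring_nf; nlinarith [h1, h2]
    have := le_of_mul_le_mul_left hc (by linarith : (0:ℝ) < b - a)
    linarith

lemma mono0 (hl : Lstar ℓ) {a b : ℝ} (ha : a ∈ Icc (0:ℝ) 1) (hb : b ∈ Icc (0:ℝ) 1)
    (hab : a ≤ b) : ℓ a 0 ≤ ℓ b 0 := by
  have h1 := hl.1 b hb a ha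
  have hg := gap_anti hl ha hb hab
  simp only [elos] at h1
  have hstep : ℓ a 0 - ℓ b 0 ≤ a * ((ℓ b 1 - ℓ b 0) - (ℓ a 1 - ℓ a 0)) := by nlinarith [h1]
  have h2 : a * ((ℓ b 1 - ℓ b 0) - (ℓ a 1 - ℓ a 0)) ≤ 0 :=
    mul_nonpos_of_nonneg_of_nonpos ha.1 (by linarith)
  linarith

lemma anti1 (hl : Lstar ℓ) {a b : ℝ} (ha : a ∈ Icc (0:ℝ) 1) (hb : b ∈ Icc (0:ℝ) 1)
    (hab : a ≤ b) : ℓ b 1 ≤ ℓ a 1 := by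
  have h2 := hl.1 a ha b hb
  have hm := mono0 hl ha hb hab
  simp only [elos] at h2
  rcases eq_or_lt_of_le hb.1 with h | h
  · have hb0 : b = 0 := h.symm
    have ha0 : a = 0 := le_antisymm (hb0 ▸ hab) ha.1
    rw [ha0, hb0]
  · have hc : b * ℓ b 1 ≤ b * ℓ a 1 := by nlinarith [hb.2]
    exact le_of_mul_le_mul_left hc h

lemma diff1_le_two (hl : Lstar ℓ) {p c : ℝ} (hp : p ∈ Icc (0:ℝ) 1) (hc : c ∈ Icc (0:ℝ) 1) :
    ℓ p 1 - ℓ c 1 ≤ 2 := by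
  have h := hl.1 c hc p hp
  have g1 := abs_le.1 (hl.2 p hp)
  have g2 := abs_le.1 (hl.2 c hc)
  simp only [elos] at h
  have hstep : ℓ p 1 - ℓ c 1 ≤ (1 - p) * ((ℓ p 1 - ℓ p 0) - (ℓ c 1 - ℓ c 0)) := by nlinarith [h]
  have h2 : (1 - p) * ((ℓ p 1 - ℓ p 0) - (ℓ c 1 - ℓ c 0)) ≤ (1 - p) * 2 :=
    mul_le_mul_of_nonneg_left (by linarith) (by linarith [hp.2])
  nlinarith [hp.1]

lemma diff0_le_two (hl : Lstar ℓ) {p c : ℝ} (hp : p ∈ Icc (0:ℝ) 1) (hc : c ∈ Icc (0:ℝ) 1) :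
    ℓ p 0 - ℓ c 0 ≤ 2 := by
  have h := hl.1 c hc p hp
  have g1 := abs_le.1 (hl.2 p hp)
  have g2 := abs_le.1 (hl.2 c hc)
  simp only [elos] at h
  have hstep : ℓ p 0 - ℓ c 0 ≤ p * ((ℓ c 1 - ℓ c 0) - (ℓ p 1 - ℓ p 0)) := by nlinarith [h]
  have h2 : p * ((ℓ c 1 - ℓ c 0) - (ℓ p 1 - ℓ p 0)) ≤ p * 2 :=
    mul_le_mul_of_nonneg_left (by linarith) hp.1
  nlinarith [hp.2]

lemma key_bound (hl : Lstar ℓ) {ε p c : ℝ} (hε : 0 < ε) (hp : p ∈ Icc (0:ℝ) (1 - ε))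
    (hc : c ∈ Icc (0:ℝ) 1) :
    elos ℓ p (p + ε) - elos ℓ c (p + ε) ≤ ε * ((ℓ p 1 - ℓ p 0) - (ℓ (p+ε) 1 - ℓ (p+ε) 0)) := by
  have hpI : p ∈ Icc (0:ℝ) 1 := ⟨hp.1, by linarith [hp.2]⟩
  have hpe : p + ε ∈ Icc (0:ℝ) 1 := ⟨by linarith [hp.1], by linarith [hp.2]⟩
  have h1 := hl.1 c hc (p+ε) hpe
  have h2 := hl.1 (p+ε) hpe p hpI
  simp only [elos] at h1 h2 ⊢
  nlinarith [h1, h2]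
end Aux
lemma signS_one_abs (t : ℝ) : |signS 1 t| = 1 := by
  unfold signS; split_ifs <;> simp

lemma vloss_lstar (v : ℝ) : Lstar (vloss v 1) := by
  constructor
  · intro p _ q _
    have habs : |signS 1 (p - v)| = 1 := signS_one_abs _
    have h1 : elos (vloss v 1) p q = -(signS 1 (p - v)) * (q - v) := by
      simp only [elos, vloss]; ring
    have h2 : elos (vloss v 1) q q = -|q - v| := by
      simp only [elos, vloss, signS]
      rcases lt_trichotomy 0 (q - v) with h | h | h
      · rw [if_pos h, abs_of_pos h]; ring
      · rw [if_neg (by linarith), if_neg (by linarith), ← h, abs_zero]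
        have hq : q = v := by linarith
        rw [hq]; ring
      · rw [if_neg (by linarith), if_pos h, abs_of_neg h]; ring
    rw [h1, h2]
    have : |(-(signS 1 (p - v))) * (q - v)| = |q - v| := by
      rw [abs_mul, abs_neg, habs, one_mul]
    linarith [neg_abs_le ((-(signS 1 (p - v))) * (q - v)), this]
  · intro p _
    have : vloss v 1 p 1 - vloss v 1 p 0 = -(signS 1 (p - v)) := by
      simp only [vloss]; ring
    rw [this, abs_neg, signS_one_abs]

def muE (ε : ℝ) : Measure ℝ := (ENNReal.ofReal (1 - ε))⁻¹ • volume.restrict (Icc (0:ℝ) (1 - ε))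
def kE (ε : ℝ) : ℝ → Measure (ℝ × ℝ) := fun p =>
  ENNReal.ofReal (p + ε) • Measure.dirac (p, (1:ℝ)) +
    ENNReal.ofReal (1 - (p + ε)) • Measure.dirac (p, (0:ℝ))
def nu1 (ε : ℝ) : Measure ℝ := (muE ε).withDensity fun p => ENNReal.ofReal (p + ε)
def nu0 (ε : ℝ) : Measure ℝ := (muE ε).withDensity fun p => ENNReal.ofReal (1 - (p + ε))

lemma hg1_meas : Measurable (fun p : ℝ => (p, (1:ℝ))) := measurable_id.prodMk measurable_const
lemma hg0_meas : Measurable (fun p : ℝ => (p, (0:ℝ))) := measurable_id.prodMk measurable_const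

lemma dirac_indicator (c : ℝ) {s : Set (ℝ × ℝ)} (hs : MeasurableSet s) :
    (fun p : ℝ => Measure.dirac (p, c) s)
      = fun p : ℝ => ((fun q : ℝ => (q, c)) ⁻¹' s).indicator (fun _ => (1:ℝ≥0∞)) p := by
  funext p
  rw [Measure.dirac_apply' _ hs]
  by_cases h : (p, c) ∈ s
  · simp [Set.indicator, h]
  · simp [Set.indicator, h]

lemma kE_meas (ε : ℝ) : Measurable (kE ε) := by
  apply Measure.measurable_of_measurable_coe
  intro s hs
  simp only [kE, Measure.coe_add, Pi.add_apply, Measure.smul_apply, smul_eq_mul]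
  apply Measurable.add
  · exact ((ENNReal.measurable_ofReal.comp (measurable_id.add_const ε)).mul
      ((dirac_indicator 1 hs) ▸ (measurable_const.indicator (hg1_meas hs))))
  · exact ((ENNReal.measurable_ofReal.comp ((measurable_id.add_const ε).const_sub 1)).mul
      ((dirac_indicator 0 hs) ▸ (measurable_const.indicator (hg0_meas hs))))

lemma muE_univ {ε : ℝ} (hε : ε < 1) : muE ε univ = 1 := by
  simp only [muE, Measure.smul_apply, Measure.restrict_apply MeasurableSet.univ, univ_inter,
    Real.volume_Icc, sub_zero, smul_eq_mul]
  exact ENNReal.inv_mul_cancel (by simp only [ne_eq, ENNReal.ofReal_eq_zero, not_le]; linarith)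
    ENNReal.ofReal_ne_top

lemma muE_ae {ε : ℝ} : ∀ᵐ p ∂(muE ε), p ∈ Icc (0:ℝ) (1 - ε) :=
  Measure.ae_smul_measure (ae_restrict_mem measurableSet_Icc) _

lemma muE_fin {ε : ℝ} (hε : ε < 1) : IsProbabilityMeasure (muE ε) := ⟨muE_univ hε⟩

lemma decompJ2 {ε : ℝ} : (muE ε).bind (kE ε) =
    Measure.map (fun p : ℝ => (p, (1:ℝ))) (nu1 ε) + Measure.map (fun p : ℝ => (p, (0:ℝ))) (nu0 ε) := by
  have hm1 : Measurable fun a : ℝ => ENNReal.ofReal (a + ε) := by fun_prop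
  ext s hs
  rw [Measure.bind_apply hs (kE_meas ε).aemeasurable, Measure.add_apply,
    Measure.map_apply hg1_meas hs, Measure.map_apply hg0_meas hs,
    nu1, nu0, withDensity_apply _ (hg1_meas hs), withDensity_apply _ (hg0_meas hs),
    ← lintegral_indicator (hg1_meas hs), ← lintegral_indicator (hg0_meas hs),
    ← lintegral_add_left (hm1.indicator (hg1_meas hs))]
  apply lintegral_congr
  intro p
  simp only [kE, Measure.coe_add, Pi.add_apply, Measure.smul_apply, smul_eq_mul,
    Measure.dirac_apply' _ hs]
  by_cases h1 : (p, (1:ℝ)) ∈ s <;> by_cases h0 : (p, (0:ℝ)) ∈ s <;>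
    simp [Set.indicator, h1, h0, Set.mem_preimage]

lemma J2_univ {ε : ℝ} (hε0 : 0 < ε) (hε : ε < 1) : (muE ε).bind (kE ε) univ = 1 := by
  have hm1 : Measurable fun a : ℝ => ENNReal.ofReal (a + ε) := by fun_prop
  rw [decompJ2, Measure.add_apply,
    Measure.map_apply hg1_meas MeasurableSet.univ, Measure.map_apply hg0_meas MeasurableSet.univ]
  simp only [preimage_univ]
  rw [nu1, nu0, withDensity_apply _ MeasurableSet.univ, withDensity_apply _ MeasurableSet.univ,
    Measure.restrict_univ, ← lintegral_add_left hm1]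
  have : ∫⁻ p, (ENNReal.ofReal (p + ε) + ENNReal.ofReal (1 - (p + ε))) ∂(muE ε)
      = ∫⁻ _, 1 ∂(muE ε) := by
    apply lintegral_congr_ae
    filter_upwards [muE_ae] with p hp
    rw [← ENNReal.ofReal_add (by linarith [hp.1]) (by linarith [hp.2])]
    norm_num
  rw [this, lintegral_one, muE_univ hε]

lemma J2_ae {ε : ℝ} (hε0 : 0 < ε) (hε : ε < 1) :
    ∀ᵐ z ∂((muE ε).bind (kE ε)), z.1 ∈ Icc (0:ℝ) (1 - ε) ∧ (z.2 = 0 ∨ z.2 = 1) := by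
  have hmeas : MeasurableSet {z : ℝ × ℝ | z.1 ∈ Icc (0:ℝ) (1 - ε) ∧ (z.2 = 0 ∨ z.2 = 1)} := by
    apply MeasurableSet.inter
    · exact measurable_fst measurableSet_Icc
    · exact ((measurable_snd (measurableSet_singleton 0)).union
        (measurable_snd (measurableSet_singleton 1)))
  rw [decompJ2, ae_add_measure_iff]
  constructor
  · rw [ae_map_iff hg1_meas.aemeasurable hmeas]
    apply (withDensity_absolutelyContinuous (muE ε) _).ae_le
    filter_upwards [muE_ae] with p hp
    exact ⟨hp, Or.inr rfl⟩
  · rw [ae_map_iff hg0_meas.aemeasurable hmeas]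
    apply (withDensity_absolutelyContinuous (muE ε) _).ae_le
    filter_upwards [muE_ae] with p hp
    exact ⟨hp, Or.inl rfl⟩

/-- Master integral formula for J₂. -/
lemma J2_integral {ε : ℝ} (hε0 : 0 < ε) (hε : ε < 1) {F : ℝ × ℝ → ℝ} (hF : Measurable F)
    {C : ℝ} (hC : ∀ z, |F z| ≤ C) :
    ∫ z, F z ∂((muE ε).bind (kE ε))
      = ∫ p, ((p + ε) * F (p, 1) + (1 - (p + ε)) * F (p, 0)) ∂(muE ε) := by
  haveI : IsProbabilityMeasure (muE ε) := muE_fin hε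
  have htn1 : Measurable fun p : ℝ => (p + ε).toNNReal := (measurable_id.add_const ε).real_toNNReal
  have htn0 : Measurable fun p : ℝ => (1 - (p + ε)).toNNReal :=
    ((measurable_id.add_const ε).const_sub 1).real_toNNReal
  have hints : ∀ (c : ℝ), Integrable (fun p => F (p, c)) (nu1 ε) ∧
      Integrable (fun p => F (p, c)) (nu0 ε) := by
    intro c
    have hm : Measurable fun p : ℝ => F (p, c) := hF.comp (measurable_id.prodMk measurable_const)
    have hnu1fin : IsFiniteMeasure (nu1 ε) := by
      constructor
      rw [nu1, withDensity_apply _ MeasurableSet.univ, Measure.restrict_univ]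
      calc ∫⁻ p, ENNReal.ofReal (p + ε) ∂(muE ε) ≤ ∫⁻ _, 2 ∂(muE ε) := by
            apply lintegral_mono_ae
            filter_upwards [muE_ae] with p hp
            calc ENNReal.ofReal (p + ε) ≤ ENNReal.ofReal 2 := by
                  apply ENNReal.ofReal_le_ofReal; linarith [hp.2]
              _ ≤ 2 := by norm_num
        _ < ⊤ := by rw [lintegral_const]; simp [measure_univ]
    have hnu0fin : IsFiniteMeasure (nu0 ε) := by
      constructor
      rw [nu0, withDensity_apply _ MeasurableSet.univ, Measure.restrict_univ]
      calc ∫⁻ p, ENNReal.ofReal (1 - (p + ε)) ∂(muE ε) ≤ ∫⁻ _, 2 ∂(muE ε) := by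
            apply lintegral_mono_ae
            filter_upwards [muE_ae] with p hp
            calc ENNReal.ofReal (1 - (p + ε)) ≤ ENNReal.ofReal 2 := by
                  apply ENNReal.ofReal_le_ofReal; linarith [hp.1]
              _ ≤ 2 := by norm_num
        _ < ⊤ := by rw [lintegral_const]; simp [measure_univ]
    exact ⟨Integrable.mono' (integrable_const C) hm.aestronglyMeasurable
        (Filter.Eventually.of_forall fun p => hC _),
      Integrable.mono' (integrable_const C) hm.aestronglyMeasurable
        (Filter.Eventually.of_forall fun p => hC _)⟩
  rw [decompJ2, integral_add_measure, integral_map hg1_meas.aemeasurable hF.aestronglyMeasurable,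
    integral_map hg0_meas.aemeasurable hF.aestronglyMeasurable]
  rotate_left
  · exact (integrable_map_measure hF.aestronglyMeasurable hg1_meas.aemeasurable).2 (hints 1).1
  · exact (integrable_map_measure hF.aestronglyMeasurable hg0_meas.aemeasurable).2 (hints 0).2
  have e1 : ∫ p, F (p, 1) ∂(nu1 ε) = ∫ p, ((p + ε).toNNReal : ℝ) • F (p, 1) ∂(muE ε) := by
    rw [nu1]
    exact integral_withDensity_eq_integral_smul htn1 _
  have e0 : ∫ p, F (p, 0) ∂(nu0 ε) = ∫ p, ((1 - (p + ε)).toNNReal : ℝ) • F (p, 0) ∂(muE ε) := by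
    rw [nu0]
    exact integral_withDensity_eq_integral_smul htn0 _
  rw [e1, e0, ← integral_add]
  rotate_left
  · apply Integrable.mono' (integrable_const C)
    · exact ((htn1.coe_nnreal_real).smul (hF.comp hg1_meas)).aestronglyMeasurable
    · filter_upwards [muE_ae] with p hp
      rw [smul_eq_mul, Real.norm_eq_abs, abs_mul, NNReal.abs_eq]
      calc ((p + ε).toNNReal : ℝ) * |F (p, 1)| ≤ 1 * |F (p, 1)| := by
            apply mul_le_mul_of_nonneg_right _ (abs_nonneg _)
            rw [Real.coe_toNNReal _ (by linarith [hp.1])]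
            linarith [hp.2]
        _ ≤ C := by rw [one_mul]; exact hC _
  · apply Integrable.mono' (integrable_const C)
    · exact ((htn0.coe_nnreal_real).smul (hF.comp hg0_meas)).aestronglyMeasurable
    · filter_upwards [muE_ae] with p hp
      rw [smul_eq_mul, Real.norm_eq_abs, abs_mul, NNReal.abs_eq]
      calc ((1 - (p + ε)).toNNReal : ℝ) * |F (p, 0)| ≤ 1 * |F (p, 0)| := by
            apply mul_le_mul_of_nonneg_right _ (abs_nonneg _)
            rw [Real.coe_toNNReal _ (by linarith [hp.2])]
            linarith [hp.1]
        _ ≤ C := by rw [one_mul]; exact hC _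
  apply integral_congr_ae
  filter_upwards [muE_ae] with p hp
  rw [smul_eq_mul, smul_eq_mul, Real.coe_toNNReal _ (by linarith [hp.1] : (0:ℝ) ≤ p + ε),
    Real.coe_toNNReal _ (by linarith [hp.2] : (0:ℝ) ≤ 1 - (p + ε))]

section PartA

lemma CEInt_J1_le {ε : ℝ} (hε : ε ∈ Ioo (0:ℝ) (1/2)) : CEInt (Measure.dirac ((1 - ε : ℝ), (1 : ℝ))) ≤ ε := by
  apply Real.sSup_le _ (le_of_lt hε.1)
  rintro x ⟨I, -, -, rfl⟩
  rw [integral_dirac]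
  by_cases h : (1 - ε) ∈ I
  · simp [Set.indicator_of_mem h, abs_of_nonneg (le_of_lt hε.1)]
  · simp [Set.indicator_of_notMem h, le_of_lt hε.1]

lemma CDL_J1_bdd {ε : ℝ} (hε : ε ∈ Ioo (0:ℝ) (1/2)) : BddAbove { x | ∃ ℓ κ, Lstar ℓ ∧ κ ∈ Mplus ∧
    x = ∫ z, (ℓ z.1 z.2 - ℓ (κ z.1) z.2) ∂(Measure.dirac ((1 - ε : ℝ), (1 : ℝ))) } := by
  refine ⟨2, ?_⟩
  rintro x ⟨ℓ, κ, hl, hκ, rfl⟩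
  rw [integral_dirac]
  have h1ε : (1 - ε : ℝ) ∈ Icc (0:ℝ) 1 := ⟨by linarith [hε.1, hε.2], by linarith [hε.1]⟩
  exact diff1_le_two hl h1ε (hκ.1 _ h1ε)

lemma CDL_J1_ge {ε : ℝ} (hε : ε ∈ Ioo (0:ℝ) (1/2)) : ε ≤ CDL Mplus (Measure.dirac ((1 - ε : ℝ), (1 : ℝ))) := by
  apply le_csSup (CDL_J1_bdd hε)
  refine ⟨vloss (1 - ε/2) 1, fun _ => 1, vloss_lstar _, ?_, ?_⟩
  · exact ⟨fun p _ => ⟨zero_le_one, le_refl 1⟩, fun a _ b _ _ => le_refl 1⟩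
  · rw [integral_dirac]
    simp only [vloss, signS]
    rw [if_neg (by linarith [hε.1]), if_pos (by linarith [hε.1]),
        if_pos (by linarith [hε.1])]
    ring
end PartA
lemma proj01_mem (x : ℝ) : proj01 x ∈ Icc (0:ℝ) 1 :=
  ⟨le_max_left _ _, max_le zero_le_one (min_le_left _ _)⟩
lemma proj01_eq {x : ℝ} (h : x ∈ Icc (0:ℝ) 1) : proj01 x = x := by
  unfold proj01; rw [min_eq_right h.2, max_eq_right h.1]
lemma proj01_mono : Monotone proj01 := fun _ _ h => max_le_max le_rfl (min_le_min le_rfl h)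
lemma proj01_meas : Measurable proj01 :=
  (continuous_const.max (continuous_const.min continuous_id)).measurable

section PartB
variable {ε : ℝ}

lemma J2_prob (hε0 : 0 < ε) (hε : ε < 1) : IsProbabilityMeasure ((muE ε).bind (kE ε)) :=
  ⟨J2_univ hε0 hε⟩

lemma CEInt_J2_elem_le_one (hε0 : 0 < ε) (hε : ε < 1) {x : ℝ}
    (hx : x ∈ { x | ∃ I : Set ℝ, I.OrdConnected ∧ I ⊆ Icc (0:ℝ) 1 ∧
      x = |∫ z, I.indicator (fun _ => (1:ℝ)) z.1 * (z.2 - z.1) ∂((muE ε).bind (kE ε))| }) :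
    x ≤ 1 := by
  haveI := J2_prob hε0 hε
  obtain ⟨I, -, -, rfl⟩ := hx
  calc |∫ z, I.indicator (fun _ => (1:ℝ)) z.1 * (z.2 - z.1) ∂((muE ε).bind (kE ε))|
      ≤ ∫ z, ‖I.indicator (fun _ => (1:ℝ)) z.1 * (z.2 - z.1)‖ ∂((muE ε).bind (kE ε)) := by
        simpa [Real.norm_eq_abs] using norm_integral_le_integral_norm
          (μ := (muE ε).bind (kE ε)) (fun z : ℝ × ℝ => I.indicator (fun _ => (1:ℝ)) z.1 * (z.2 - z.1))
    _ ≤ ∫ _, (1:ℝ) ∂((muE ε).bind (kE ε)) := by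
        apply integral_mono_of_nonneg (Filter.Eventually.of_forall fun z => norm_nonneg _)
          (integrable_const 1)
        filter_upwards [J2_ae hε0 hε] with z hz
        rw [Real.norm_eq_abs, abs_mul]
        have h1 : |I.indicator (fun _ => (1:ℝ)) z.1| ≤ 1 := by
          by_cases h : z.1 ∈ I
          · rw [Set.indicator_of_mem h]; norm_num
          · rw [Set.indicator_of_notMem h]; norm_num
        have h2 : |z.2 - z.1| ≤ 1 := by
          rcases hz.2 with h | h <;> rw [h] <;> rw [abs_le] <;>
            constructor <;> linarith [hz.1.1, hz.1.2]
        calc |I.indicator (fun _ => (1:ℝ)) z.1| * |z.2 - z.1| ≤ 1 * 1 :=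
              mul_le_mul h1 h2 (abs_nonneg _) zero_le_one
          _ = 1 := by norm_num
    _ = 1 := by simp

lemma CEInt_J2_ge (hε0 : 0 < ε) (hε : ε < 1/2) : ε ≤ CEInt ((muE ε).bind (kE ε)) := by
  have hε1 : ε < 1 := by linarith
  haveI := muE_fin hε1
  apply le_csSup ⟨1, fun x hx => CEInt_J2_elem_le_one hε0 hε1 hx⟩
  refine ⟨Icc 0 1, ordConnected_Icc, subset_rfl, ?_⟩
  set F : ℝ × ℝ → ℝ := fun z => (Icc (0:ℝ) 1).indicator (fun _ => (1:ℝ)) z.1 * (proj01 z.2 - z.1)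
    with hFdef
  have hF : Measurable F := by
    apply Measurable.mul
    · exact (measurable_const.indicator measurableSet_Icc).comp measurable_fst
    · exact (proj01_meas.comp measurable_snd).sub measurable_fst
  have hC : ∀ z, |F z| ≤ 1 := by
    intro z
    simp only [hFdef]
    by_cases h : z.1 ∈ Icc (0:ℝ) 1
    · simp only [Set.indicator_of_mem h, one_mul]
      have := proj01_mem z.2
      rw [abs_le]; constructor <;> [linarith [this.1, h.2]; linarith [this.2, h.1]]
    · simp [Set.indicator_of_notMem h]
  have heq : ∫ z, (Icc (0:ℝ) 1).indicator (fun _ => (1:ℝ)) z.1 * (z.2 - z.1)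
        ∂((muE ε).bind (kE ε)) = ∫ z, F z ∂((muE ε).bind (kE ε)) := by
    apply integral_congr_ae
    filter_upwards [J2_ae hε0 hε1] with z hz
    rcases hz.2 with h | h <;> simp only [hFdef] <;> simp only [h] <;> norm_num [proj01]
  rw [heq, J2_integral hε0 hε1 hF hC]
  have : ∫ p, ((p + ε) * F (p, 1) + (1 - (p + ε)) * F (p, 0)) ∂(muE ε) = ∫ _, ε ∂(muE ε) := by
    apply integral_congr_ae
    filter_upwards [muE_ae] with p hp
    have hpI : p ∈ Icc (0:ℝ) 1 := ⟨hp.1, by linarith [hp.2]⟩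
    simp only [hFdef]
    simp only [Set.indicator_of_mem hpI]
    rw [proj01_eq (by norm_num : (1:ℝ) ∈ Icc (0:ℝ) 1),
      proj01_eq (by norm_num : (0:ℝ) ∈ Icc (0:ℝ) 1)]
    ring
  rw [this, integral_const, probReal_univ]
  simp [abs_of_nonneg (le_of_lt hε0)]
end PartB

section CDLJ2
variable {ε : ℝ}

lemma CDL_J2_le (hε0 : 0 < ε) (hε : ε < 1/2) :
    CDL Mplus ((muE ε).bind (kE ε)) ≤ 4 * ε ^ 2 := by
  have hε1 : ε < 1 := by linarith
  haveI := muE_fin hε1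
  apply Real.sSup_le _ (by positivity)
  rintro x ⟨ℓ, κ, hl, hκ, rfl⟩
  -- measurable versions
  set m1 : ℝ → ℝ := fun x => ℓ (proj01 x) 1 with hm1def
  set m0 : ℝ → ℝ := fun x => ℓ (proj01 x) 0 with hm0def
  set cκ : ℝ → ℝ := fun x => κ (proj01 x) with hcdef
  have hm1anti : Antitone m1 := fun a b h => anti1 hl (proj01_mem a) (proj01_mem b) (proj01_mono h)
  have hm0mono : Monotone m0 := fun a b h => mono0 hl (proj01_mem a) (proj01_mem b) (proj01_mono h)
  have hcmono : Monotone cκ := fun a b h => hκ.2 (proj01_mem a) (proj01_mem b) (proj01_mono h)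
  have hcmem : ∀ x, cκ x ∈ Icc (0:ℝ) 1 := fun x => hκ.1 _ (proj01_mem x)
  have hG1 : Measurable (fun x => m1 x - m1 (cκ x)) :=
    hm1anti.measurable.sub (Antitone.measurable (fun a b h => hm1anti (hcmono h)))
  have hG0 : Measurable (fun x => m0 x - m0 (cκ x)) :=
    hm0mono.measurable.sub (Monotone.measurable (fun a b h => hm0mono (hcmono h)))
  set F : ℝ × ℝ → ℝ := fun z =>
    if z.2 = 1 then m1 z.1 - m1 (cκ z.1) else m0 z.1 - m0 (cκ z.1) with hFdef
  have hF : Measurable F := by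
    apply Measurable.ite (measurable_snd (measurableSet_singleton (1:ℝ)))
    · exact hG1.comp measurable_fst
    · exact hG0.comp measurable_fst
  have hm1c : ∀ x, m1 (cκ x) = ℓ (cκ x) 1 := fun x => by simp only [hm1def]; rw [proj01_eq (hcmem x)]
  have hm0c : ∀ x, m0 (cκ x) = ℓ (cκ x) 0 := fun x => by simp only [hm0def]; rw [proj01_eq (hcmem x)]
  have hC : ∀ z, |F z| ≤ 2 := by
    intro z
    have hp := proj01_mem z.1
    have hc := hcmem z.1
    simp only [hFdef]
    by_cases h : z.2 = 1
    · rw [if_pos h, hm1c]; simp only [hm1def]; rw [abs_le]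
      exact ⟨by linarith [diff1_le_two hl hc hp], diff1_le_two hl hp hc⟩
    · rw [if_neg h, hm0c]; simp only [hm0def]; rw [abs_le]
      exact ⟨by linarith [diff0_le_two hl hc hp], diff0_le_two hl hp hc⟩
  -- identify F with the integrand a.e.
  have heq : ∫ z, (ℓ z.1 z.2 - ℓ (κ z.1) z.2) ∂((muE ε).bind (kE ε))
      = ∫ z, F z ∂((muE ε).bind (kE ε)) := by
    apply integral_congr_ae
    filter_upwards [J2_ae hε0 hε1] with z hz
    have hz1 : z.1 ∈ Icc (0:ℝ) 1 := ⟨hz.1.1, by linarith [hz.1.2]⟩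
    have hcz : cκ z.1 = κ z.1 := by simp only [hcdef]; rw [proj01_eq hz1]
    rcases hz.2 with h | h
    · simp only [hFdef]; simp only [h]
      rw [if_neg (by norm_num), hm0c]; simp only [hm0def, hcdef]; rw [proj01_eq hz1]
    · simp only [hFdef]; simp only [h, if_pos]
      rw [hm1c]; simp only [hm1def, hcdef]; rw [proj01_eq hz1]
  rw [heq, J2_integral hε0 hε1 hF hC]
  -- the antitone weight function
  set gt : ℝ → ℝ := fun x => ℓ (proj01 x) 1 - ℓ (proj01 x) 0 with hgtdef
  have hgtanti : Antitone gt := fun a b h =>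
    gap_anti hl (proj01_mem a) (proj01_mem b) (proj01_mono h)
  have hgtb : ∀ x, |gt x| ≤ 1 := fun x => hl.2 _ (proj01_mem x)
  -- pointwise bound
  have hmono : ∫ p, ((p + ε) * F (p, 1) + (1 - (p + ε)) * F (p, 0)) ∂(muE ε)
      ≤ ∫ p, ε * (gt p - gt (p + ε)) ∂(muE ε) := by
    apply integral_mono_ae
    · apply Integrable.mono' (integrable_const 4)
      · exact (((measurable_id.add_const ε).mul
          (hF.comp (measurable_id.prodMk measurable_const))).add
          (((measurable_id.add_const ε).const_sub 1).mul
          (hF.comp (measurable_id.prodMk measurable_const)))).aestronglyMeasurable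
      · filter_upwards [muE_ae] with p hp
        rw [Real.norm_eq_abs]
        have h1 := hC (p, 1)
        have h0 := hC (p, 0)
        have hb1 : |(p + ε) * F (p, 1)| ≤ 2 := by
          rw [abs_mul]
          calc |p + ε| * |F (p, 1)| ≤ 1 * 2 := by
                apply mul_le_mul _ h1 (abs_nonneg _) zero_le_one
                rw [abs_le]; constructor <;> linarith [hp.1, hp.2]
            _ = 2 := by norm_num
        have hb0 : |(1 - (p + ε)) * F (p, 0)| ≤ 2 := by
          rw [abs_mul]
          calc |1 - (p + ε)| * |F (p, 0)| ≤ 1 * 2 := by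
                apply mul_le_mul _ h0 (abs_nonneg _) zero_le_one
                rw [abs_le]; constructor <;> linarith [hp.1, hp.2]
            _ = 2 := by norm_num
        calc |(p + ε) * F (p, 1) + (1 - (p + ε)) * F (p, 0)|
            ≤ |(p + ε) * F (p, 1)| + |(1 - (p + ε)) * F (p, 0)| := abs_add_le _ _
          _ ≤ 4 := by linarith
    · apply Integrable.mono' (integrable_const (2 * ε))
      · exact ((hgtanti.measurable.sub
          ((Antitone.measurable (fun a b h => hgtanti (by linarith : a + ε ≤ b + ε))))).const_mul
            ε).aestronglyMeasurable
      · apply Filter.Eventually.of_forall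
        intro p
        rw [Real.norm_eq_abs, abs_mul, abs_of_pos hε0]
        have := abs_sub (gt p) (gt (p + ε))
        calc ε * |gt p - gt (p + ε)| ≤ ε * 2 := by
              apply mul_le_mul_of_nonneg_left _ (le_of_lt hε0)
              calc |gt p - gt (p + ε)| ≤ |gt p| + |gt (p + ε)| := abs_sub _ _
                _ ≤ 2 := by linarith [hgtb p, hgtb (p + ε)]
          _ = 2 * ε := by ring
    · filter_upwards [muE_ae] with p hp
      have hpI : p ∈ Icc (0:ℝ) 1 := ⟨hp.1, by linarith [hp.2]⟩
      have hpeI : p + ε ∈ Icc (0:ℝ) 1 := ⟨by linarith [hp.1], by linarith [hp.2]⟩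
      have hκp : κ p ∈ Icc (0:ℝ) 1 := hκ.1 p hpI
      have hF1 : F (p, 1) = ℓ p 1 - ℓ (κ p) 1 := by
        simp only [hFdef]
        norm_num
        rw [hm1c]; simp only [hm1def, hcdef]; rw [proj01_eq hpI]
      have hF0 : F (p, 0) = ℓ p 0 - ℓ (κ p) 0 := by
        simp only [hFdef]
        norm_num
        rw [hm0c]; simp only [hm0def, hcdef]; rw [proj01_eq hpI]
      have hgt1 : gt p = ℓ p 1 - ℓ p 0 := by simp only [hgtdef]; rw [proj01_eq hpI]
      have hgt2 : gt (p + ε) = ℓ (p+ε) 1 - ℓ (p+ε) 0 := by simp only [hgtdef]; rw [proj01_eq hpeI]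
      have hk := key_bound hl hε0 hp hκp
      simp only [elos] at hk
      rw [hF1, hF0, hgt1, hgt2]
      nlinarith [hk]
  refine le_trans hmono ?_
  -- compute the integral of the weight difference
  have hint : ∀ a b : ℝ, IntervalIntegrable gt volume a b := fun a b =>
    hgtanti.intervalIntegrable
  have hgtInt : Integrable gt (muE ε) :=
    Integrable.mono' (integrable_const 1) hgtanti.measurable.aestronglyMeasurable
      (Filter.Eventually.of_forall fun p => by rw [Real.norm_eq_abs]; exact hgtb p)
  have hgtsInt : Integrable (fun p => gt (p + ε)) (muE ε) :=
    Integrable.mono' (integrable_const 1)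
      (Antitone.measurable (fun a b h => hgtanti (by linarith : a + ε ≤ b + ε))).aestronglyMeasurable
      (Filter.Eventually.of_forall fun p => by rw [Real.norm_eq_abs]; exact hgtb _)
  have e1 : ∫ p, ε * (gt p - gt (p + ε)) ∂(muE ε)
      = ε * ((∫ p, gt p ∂(muE ε)) - ∫ p, gt (p + ε) ∂(muE ε)) := by
    rw [integral_const_mul, integral_sub hgtInt hgtsInt]
  rw [e1]
  have hc2 : ((ENNReal.ofReal (1 - ε))⁻¹).toReal = (1 - ε)⁻¹ := by
    rw [ENNReal.toReal_inv, ENNReal.toReal_ofReal (by linarith)]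
  have e2 : ∫ p, gt p ∂(muE ε) = (1 - ε)⁻¹ * ∫ x in (0:ℝ)..(1 - ε), gt x := by
    rw [muE, integral_smul_measure, hc2, smul_eq_mul,
      intervalIntegral.integral_of_le (by linarith : (0:ℝ) ≤ 1 - ε),
      ← integral_Icc_eq_integral_Ioc]
  have e3' : ∫ x in (0:ℝ)..(1 - ε), gt (x + ε) = ∫ x in ε..(1:ℝ), gt x := by
    rw [intervalIntegral.integral_comp_add_right gt ε]
    norm_num
  have e3 : ∫ p, gt (p + ε) ∂(muE ε) = (1 - ε)⁻¹ * ∫ x in ε..(1:ℝ), gt x := by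
    rw [muE, integral_smul_measure, hc2, smul_eq_mul]
    congr 1
    rw [← e3', intervalIntegral.integral_of_le (by linarith : (0:ℝ) ≤ 1 - ε),
      ← integral_Icc_eq_integral_Ioc]
  rw [e2, e3, ← mul_sub]
  have hsplit : (∫ x in (0:ℝ)..(1 - ε), gt x) - (∫ x in ε..(1:ℝ), gt x)
      = (∫ x in (0:ℝ)..ε, gt x) - (∫ x in (1 - ε)..(1:ℝ), gt x) := by
    have h1 : (∫ x in (0:ℝ)..ε, gt x) + (∫ x in ε..(1 - ε), gt x)
        = ∫ x in (0:ℝ)..(1 - ε), gt x :=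
      intervalIntegral.integral_add_adjacent_intervals (hint _ _) (hint _ _)
    have h2 : (∫ x in ε..(1 - ε), gt x) + (∫ x in (1 - ε)..(1:ℝ), gt x)
        = ∫ x in ε..(1:ℝ), gt x :=
      intervalIntegral.integral_add_adjacent_intervals (hint _ _) (hint _ _)
    linarith
  have hb1 : |∫ x in (0:ℝ)..ε, gt x| ≤ ε := by
    have := intervalIntegral.norm_integral_le_of_norm_le_const
      (C := 1) (f := gt) (a := 0) (b := ε) (fun x _ => by rw [Real.norm_eq_abs]; exact hgtb x)
    rw [Real.norm_eq_abs] at this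
    calc |∫ x in (0:ℝ)..ε, gt x| ≤ 1 * |ε - 0| := this
      _ = ε := by rw [abs_of_pos (by linarith : (0:ℝ) < ε - 0)]; ring
  have hb2 : |∫ x in (1 - ε)..(1:ℝ), gt x| ≤ ε := by
    have := intervalIntegral.norm_integral_le_of_norm_le_const
      (C := 1) (f := gt) (a := 1 - ε) (b := 1) (fun x _ => by rw [Real.norm_eq_abs]; exact hgtb x)
    rw [Real.norm_eq_abs] at this
    calc |∫ x in (1 - ε)..(1:ℝ), gt x| ≤ 1 * |1 - (1 - ε)| := this
      _ = ε := by rw [abs_of_pos (by linarith : (0:ℝ) < 1 - (1 - ε))]; ring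
  have habs : (∫ x in (0:ℝ)..(1 - ε), gt x) - (∫ x in ε..(1:ℝ), gt x) ≤ 2 * ε := by
    rw [hsplit]
    have := abs_le.1 hb1
    have := abs_le.1 hb2
    linarith [(abs_le.1 hb1).2, (abs_le.1 hb2).1]
  have hinv : (1 - ε)⁻¹ ≤ 2 := by
    rw [show (2:ℝ) = ((1:ℝ)/2)⁻¹ by norm_num]
    apply inv_anti₀ (by norm_num) (by linarith)
  have hinvpos : (0:ℝ) < (1 - ε)⁻¹ := inv_pos.2 (by linarith)
  calc ε * ((1 - ε)⁻¹ * ((∫ x in (0:ℝ)..(1 - ε), gt x) - ∫ x in ε..(1:ℝ), gt x))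
      ≤ ε * ((1 - ε)⁻¹ * (2 * ε)) := by
        apply mul_le_mul_of_nonneg_left _ (le_of_lt hε0)
        exact mul_le_mul_of_nonneg_left habs (le_of_lt hinvpos)
    _ ≤ ε * (2 * (2 * ε)) := by
        apply mul_le_mul_of_nonneg_left _ (le_of_lt hε0)
        apply mul_le_mul_of_nonneg_right hinv (by linarith)
    _ = 4 * ε ^ 2 := by ring
end CDLJ2


/-- tightness of the quadratic relation between `CDL_{M₊}` and `CE_Int`. -/
theorem tightness_CDL_vs_CEInt (ε : ℝ) (hε : ε ∈ Ioo (0:ℝ) (1/2))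
    (J₁ J₂ : Measure (ℝ × ℝ))
    (hJ₁ : J₁ = Measure.dirac ((1 - ε : ℝ), (1 : ℝ)))
    (hJ₂ : J₂ = ((ENNReal.ofReal (1 - ε))⁻¹ • volume.restrict (Icc (0:ℝ) (1 - ε))).bind
      (fun p : ℝ => ENNReal.ofReal (p + ε) • Measure.dirac (p, (1:ℝ)) +
        ENNReal.ofReal (1 - (p + ε)) • Measure.dirac (p, (0:ℝ)))) :
    (CEInt J₁ ≤ ε ∧ ε ≤ CDL Mplus J₁ ∧ CEInt J₁ ≤ CDL Mplus J₁) ∧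
    (ε ≤ CEInt J₂ ∧ CDL Mplus J₂ ≤ 4 * ε ^ 2 ∧ CDL Mplus J₂ ≤ 4 * CEInt J₂ ^ 2) := by
  have hJ₂' : J₂ = (muE ε).bind (kE ε) := hJ₂
  subst hJ₁ hJ₂'
  constructor
  · exact ⟨CEInt_J1_le hε, CDL_J1_ge hε, le_trans (CEInt_J1_le hε) (CDL_J1_ge hε)⟩
  · refine ⟨CEInt_J2_ge hε.1 hε.2, CDL_J2_le hε.1 hε.2, ?_⟩
    have h1 := CDL_J2_le hε.1 hε.2
    have h2 := CEInt_J2_ge hε.1 hε.2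
    have h3 : 4 * ε ^ 2 ≤ 4 * CEInt ((muE ε).bind (kE ε)) ^ 2 := by nlinarith [hε.1]
    linarith
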